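/- Fix an integer K ≥ 2 and σ₋ ∈ (0, 1/2); set ρ = 1 − σ₋/(1−σ₋) and C = 2/(ρ(1−ρ)³). Let Q : {1,…,K} × {1,…,K} → ℝ be a stochastic matrix (each row sums to 1) with Q(i,j) ≥ σ₋ for all i,j. Fix an integer t ≥ 1, a state x̄ ∈ {1,…,K}, and positive weights w_s : {1,…,K} → (0,∞) for s = 0,1,…,t. For a probability vector μ on {1,…,K}, define Num(μ) = ∑ μ(x₀) · ∏_{s=1}^{t} Q(x_{s−1}, x_s) · ∏_{s=0}^{t} w_s(x_s) and Den(μ) = ∑ μ(x₀) · ∏_{s=1}^{t} Q(x_{s−1}, x_s) · ∏_{s=0}^{t−1} w_s(x_s), where both sums range over sequences (x₀,…,x_t) ∈ {1,…,K}^{t+1} with x_t ≠ x̄. Then, for any two probability vectors μ and ν on {1,…,K}, | log(Num(μ)/Den(μ)) − log(Num(ν)/Den(ν)) | ≤ C · ρ^t. -/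

import Mathlib

namespace Stmt8aux

noncomputable def Bv {K : ℕ} (Q : Fin K → Fin K → ℝ) :
    ℕ → (ℕ → Fin K → ℝ) → (Fin K → ℝ) → Fin K → ℝ
  | 0, _, v => v
  | n+1, wf, v => fun x => wf 0 x * ∑ y, Q x y * Bv Q n (fun k => wf (k+1)) v y

/-- pure arithmetic core -/
lemma frac_diff (ρ a b u1 v1 u2 v2 mn Mx : ℝ) (hρ0 : 0 < ρ) (hρ1 : ρ < 1) (hb : 0 < b)
    (ha1 : mn * b ≤ a) (ha2 : a ≤ Mx * b)
    (hv10 : 0 ≤ v1) (hv1 : (1 - ρ) * v1 ≤ ρ * b) (hu1 : u1 ≤ Mx * v1)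
    (hv20 : 0 ≤ v2) (hv2 : (1 - ρ) * v2 ≤ ρ * b) (hu2 : mn * v2 ≤ u2) :
    (a + u1) / (b + v1) - (a + u2) / (b + v2) ≤ ρ * (Mx - mn) := by
  have hbv1 : 0 < b + v1 := by linarith
  have hbv2 : 0 < b + v2 := by linarith
  have c1 : (a + u1) / (b + v1) ≤ (ρ * Mx * b + (1 - ρ) * a) / b := by
    rw [div_le_div_iff₀ hbv1 hb]
    nlinarith [mul_nonneg (by nlinarith : (0:ℝ) ≤ Mx * b - a) (by linarith : (0:ℝ) ≤ ρ * b - (1 - ρ) * v1),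
      mul_le_mul_of_nonneg_right hu1 hb.le]
  have c2 : (ρ * mn * b + (1 - ρ) * a) / b ≤ (a + u2) / (b + v2) := by
    rw [div_le_div_iff₀ hb hbv2]
    nlinarith [mul_nonneg (by nlinarith : (0:ℝ) ≤ a - mn * b) (by linarith : (0:ℝ) ≤ ρ * b - (1 - ρ) * v2),
      mul_le_mul_of_nonneg_right hu2 hb.le]
  have : (ρ * Mx * b + (1 - ρ) * a) / b - (ρ * mn * b + (1 - ρ) * a) / b = ρ * (Mx - mn) := by
    field_simp; ring
  linarith


lemma step_core (σ : ℝ) (hσ0 : 0 < σ) (hσh : σ < 1/2) {K : ℕ}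
    (q1 q2 f g : Fin K → ℝ)
    (hq1a : ∀ y, σ ≤ q1 y) (hq1b : ∀ y, q1 y ≤ 1 - σ)
    (hq2a : ∀ y, σ ≤ q2 y) (hq2b : ∀ y, q2 y ≤ 1 - σ)
    (hg : ∀ y, 0 ≤ g y) (hgpos : 0 < ∑ y, g y)
    (mn Mx : ℝ) (hfg1 : ∀ y, mn * g y ≤ f y) (hfg2 : ∀ y, f y ≤ Mx * g y) :
    (∑ y, q1 y * f y) / (∑ y, q1 y * g y) - (∑ y, q2 y * f y) / (∑ y, q2 y * g y)
      ≤ (1 - σ / (1 - σ)) * (Mx - mn) := by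
  have h1σ : 0 < 1 - σ := by linarith
  set ρ : ℝ := 1 - σ / (1 - σ) with hρ
  have hρ1m : 1 - ρ = σ / (1 - σ) := by rw [hρ]; ring
  have hρ0 : 0 < ρ := by
    rw [hρ]; have : σ / (1 - σ) < 1 := (div_lt_one h1σ).2 (by linarith)
    linarith
  have hρ1 : ρ < 1 := by
    rw [hρ]; have : 0 < σ / (1 - σ) := div_pos hσ0 h1σ
    linarith
  set a : ℝ := σ * ∑ y, f y with ha
  set b : ℝ := σ * ∑ y, g y with hb
  have hbpos : 0 < b := mul_pos hσ0 hgpos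
  have hsplit : ∀ q : Fin K → ℝ, ∀ h : Fin K → ℝ,
      (∑ y, q y * h y) = σ * ∑ y, h y + ∑ y, (q y - σ) * h y := by
    intro q h
    rw [Finset.mul_sum, ← Finset.sum_add_distrib]
    exact Finset.sum_congr rfl fun y _ => by ring
  have key : ∀ q : Fin K → ℝ, (∀ y, σ ≤ q y) → (∀ y, q y ≤ 1 - σ) →
      (0 ≤ ∑ y, (q y - σ) * g y) ∧ ((1-ρ) * (∑ y, (q y - σ) * g y) ≤ ρ * b)
      ∧ (∑ y, (q y - σ) * f y ≤ Mx * ∑ y, (q y - σ) * g y)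
      ∧ (mn * ∑ y, (q y - σ) * g y ≤ ∑ y, (q y - σ) * f y) := by
    intro q hqa hqb
    refine ⟨Finset.sum_nonneg fun y _ => mul_nonneg (by linarith [hqa y]) (hg y), ?_, ?_, ?_⟩
    · have h2 : (∑ y, (q y - σ) * g y) ≤ (1 - 2*σ) * ∑ y, g y := by
        rw [Finset.mul_sum]
        exact Finset.sum_le_sum fun y _ =>
          mul_le_mul_of_nonneg_right (by linarith [hqb y]) (hg y)
      have hρb : ρ * b = (σ / (1 - σ)) * ((1 - 2*σ) * ∑ y, g y) := by
        rw [hρ, hb]; field_simp; ring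
      rw [hρ1m, hρb]
      exact mul_le_mul_of_nonneg_left h2 (le_of_lt (div_pos hσ0 h1σ))
    · rw [Finset.mul_sum]
      exact Finset.sum_le_sum fun y _ => by
        have := hfg2 y; have := hqa y; nlinarith
    · rw [Finset.mul_sum]
      exact Finset.sum_le_sum fun y _ => by
        have := hfg1 y; have := hqa y; nlinarith
  obtain ⟨h10, h1v, h1u, _⟩ := key q1 hq1a hq1b
  obtain ⟨h20, h2v, _, h2u⟩ := key q2 hq2a hq2b
  have ha1 : mn * b ≤ a := by
    rw [ha, hb, Finset.mul_sum, Finset.mul_sum, Finset.mul_sum]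
    exact Finset.sum_le_sum fun y _ => by have := hfg1 y; nlinarith
  have ha2 : a ≤ Mx * b := by
    rw [ha, hb, Finset.mul_sum, Finset.mul_sum, Finset.mul_sum]
    exact Finset.sum_le_sum fun y _ => by have := hfg2 y; nlinarith
  rw [hsplit q1 f, hsplit q1 g, hsplit q2 f, hsplit q2 g]
  exact frac_diff ρ a b _ _ _ _ mn Mx hρ0 hρ1 hbpos ha1 ha2 h10 h1v h1u h20 h2v h2u

lemma pathsum {K : ℕ} (Q : Fin K → Fin K → ℝ) :
    ∀ (n : ℕ) (wf : ℕ → Fin K → ℝ) (v : Fin K → ℝ) (m : Fin K → ℝ),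
      (∑ x : Fin (n+1) → Fin K, m (x 0) * (∏ s : Fin n, Q (x s.castSucc) (x s.succ)) *
        ((∏ s : Fin n, wf s (x s.castSucc)) * v (x (Fin.last n))))
      = ∑ x0, m x0 * Bv Q n wf v x0 := by
  intro n
  induction n with
  | zero =>
    intro wf v m
    rw [← (Equiv.funUnique (Fin 1) (Fin K)).symm.sum_comp]
    simp [Bv, Fin.last]
  | succ n IH =>
    intro wf v m
    rw [← ((Fin.consEquiv (fun _ : Fin (n+2) => Fin K)).sum_comp _)]
    rw [Fintype.sum_prod_type]
    have hstep : ∀ (x0 : Fin K) (x : Fin (n+1) → Fin K),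
        m ((Fin.cons x0 x : Fin (n+2) → Fin K) 0) *
          (∏ s : Fin (n+1), Q ((Fin.cons x0 x : Fin (n+2) → Fin K) s.castSucc)
            ((Fin.cons x0 x : Fin (n+2) → Fin K) s.succ)) *
          ((∏ s : Fin (n+1), wf s ((Fin.cons x0 x : Fin (n+2) → Fin K) s.castSucc)) *
            v ((Fin.cons x0 x : Fin (n+2) → Fin K) (Fin.last (n+1))))
        = (m x0 * wf 0 x0) *
          (Q x0 (x 0) * ((∏ s : Fin n, Q (x s.castSucc) (x s.succ)) *
            ((∏ s : Fin n, wf (s+1) (x s.castSucc)) * v (x (Fin.last n))))) := by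
      intro x0 x
      rw [Fin.prod_univ_succ, Fin.prod_univ_succ]
      rw [← Fin.succ_last]
      simp only [Fin.cons_zero, Fin.cons_succ, Fin.castSucc_zero, Fin.succ_zero_eq_one,
        Fin.val_zero]
      have h1 : ∀ s : Fin n, (Fin.cons x0 x : Fin (n+2) → Fin K) (s.succ).castSucc = x s.castSucc := by
        intro s; rw [← Fin.succ_castSucc]; exact Fin.cons_succ _ _ _
      have h2 : (Fin.cons x0 x : Fin (n+2) → Fin K) (1 : Fin (n+2)) = x 0 := by
        have : (1 : Fin (n+2)) = Fin.succ 0 := rfl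
        rw [this, Fin.cons_succ]
      simp only [h1, h2, Fin.cons_succ]
      have h3 : ∀ s : Fin n, ((s.succ : Fin (n+1)) : ℕ) = (s : ℕ) + 1 := fun s => rfl
      have h4 : ∏ s : Fin n, wf ((s.succ : Fin (n+1)) : ℕ) (x s.castSucc)
          = ∏ s : Fin n, wf ((s : ℕ) + 1) (x s.castSucc) := by
        exact Finset.prod_congr rfl fun s _ => by rw [h3]
      rw [h4]
      ring
    have hc : ∀ (x0 : Fin K) (x : Fin (n+1) → Fin K),
        (Fin.consEquiv fun _ : Fin (n+2) => Fin K) (x0, x) = Fin.cons x0 x := fun _ _ => rfl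
    simp only [hc]
    rw [Finset.sum_congr rfl fun x0 _ => Finset.sum_congr rfl fun x _ => hstep x0 x]
    have : ∀ x0 : Fin K,
        (∑ x : Fin (n+1) → Fin K, (m x0 * wf 0 x0) *
          (Q x0 (x 0) * ((∏ s : Fin n, Q (x s.castSucc) (x s.succ)) *
            ((∏ s : Fin n, wf (s+1) (x s.castSucc)) * v (x (Fin.last n))))))
        = m x0 * Bv Q (n+1) wf v x0 := by
      intro x0
      rw [← Finset.mul_sum]
      have := IH (fun k => wf (k+1)) v (fun z => Q x0 z)
      have heq : (∑ x : Fin (n+1) → Fin K,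
          Q x0 (x 0) * ((∏ s : Fin n, Q (x s.castSucc) (x s.succ)) *
            ((∏ s : Fin n, wf (s+1) (x s.castSucc)) * v (x (Fin.last n)))))
          = ∑ y, Q x0 y * Bv Q n (fun k => wf (k+1)) v y := by
        rw [← this]
        exact Finset.sum_congr rfl fun x _ => by ring
      rw [heq]
      show m x0 * wf 0 x0 * (∑ y, Q x0 y * Bv Q n (fun k => wf (k+1)) v y) = _
      rw [show Bv Q (n+1) wf v x0 = wf 0 x0 * ∑ y, Q x0 y * Bv Q n (fun k => wf (k+1)) v y from rfl]
      ring
    rw [Finset.sum_congr rfl fun x0 _ => this x0]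


lemma Bv_peel {K : ℕ} (Q : Fin K → Fin K → ℝ) :
    ∀ (n : ℕ) (wf : ℕ → Fin K → ℝ) (v : Fin K → ℝ),
      Bv Q (n+1) wf v = Bv Q n wf (fun x => wf n x * ∑ y, Q x y * v y) := by
  intro n
  induction n with
  | zero => intro wf v; rfl
  | succ n IH =>
    intro wf v
    funext x
    show wf 0 x * ∑ y, Q x y * Bv Q (n+1) (fun k => wf (k+1)) v y = _
    rw [IH (fun k => wf (k+1)) v]
    rfl

section
variable (σ : ℝ) (hσ0 : 0 < σ) (hσh : σ < 1/2) {K : ℕ}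
  (Q : Fin K → Fin K → ℝ) (hQa : ∀ x y, σ ≤ Q x y) (hQb : ∀ x y, Q x y ≤ 1 - σ)

include hσ0 hσh hQa hQb

lemma onestep (c : Fin K → ℝ) (hc : ∀ x, 0 < c x)
    (f g : Fin K → ℝ) (mn Mx : ℝ)
    (hg : ∀ y, 0 ≤ g y) (hgpos : 0 < ∑ y, g y)
    (hfg1 : ∀ y, mn * g y ≤ f y) (hfg2 : ∀ y, f y ≤ Mx * g y) :
    (∀ x, 0 < c x * ∑ y, Q x y * g y) ∧
    (∀ x, mn * (c x * ∑ y, Q x y * g y) ≤ c x * ∑ y, Q x y * f y) ∧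
    (∀ x, c x * ∑ y, Q x y * f y ≤ Mx * (c x * ∑ y, Q x y * g y)) ∧
    (∀ x x', (c x * ∑ y, Q x y * f y) / (c x * ∑ y, Q x y * g y)
      - (c x' * ∑ y, Q x' y * f y) / (c x' * ∑ y, Q x' y * g y)
      ≤ (1 - σ / (1 - σ)) * (Mx - mn)) := by
  have hGin : ∀ x, 0 < ∑ y, Q x y * g y := by
    intro x
    have h1 : σ * ∑ y, g y ≤ ∑ y, Q x y * g y := by
      rw [Finset.mul_sum]
      exact Finset.sum_le_sum fun y _ => mul_le_mul_of_nonneg_right (hQa x y) (hg y)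
    have := mul_pos hσ0 hgpos
    linarith
  have hlow : ∀ x, mn * (∑ y, Q x y * g y) ≤ ∑ y, Q x y * f y := by
    intro x
    rw [Finset.mul_sum]
    exact Finset.sum_le_sum fun y _ => by
      have h := hfg1 y; have h2 := hQa x y; nlinarith
  have hhigh : ∀ x, (∑ y, Q x y * f y) ≤ Mx * ∑ y, Q x y * g y := by
    intro x
    rw [Finset.mul_sum]
    exact Finset.sum_le_sum fun y _ => by
      have h := hfg2 y; have h2 := hQa x y; nlinarith
  refine ⟨fun x => mul_pos (hc x) (hGin x), ?_, ?_, ?_⟩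
  · intro x
    have := mul_le_mul_of_nonneg_left (hlow x) (hc x).le
    nlinarith [this]
  · intro x
    have := mul_le_mul_of_nonneg_left (hhigh x) (hc x).le
    nlinarith [this]
  · intro x x'
    rw [mul_div_mul_left _ _ (hc x).ne', mul_div_mul_left _ _ (hc x').ne']
    exact step_core σ hσ0 hσh (Q x) (Q x') f g (hQa x) (hQb x) (hQa x') (hQb x')
      hg hgpos mn Mx hfg1 hfg2

lemma contr (hKpos : 0 < K) :
    ∀ (n : ℕ) (wf : ℕ → Fin K → ℝ), (∀ k x, 0 < wf k x) →
    ∀ (f g : Fin K → ℝ) (mn Mx : ℝ), 0 ≤ mn → (∀ y, 0 ≤ g y) → (0 < ∑ y, g y) →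
      (∀ y, mn * g y ≤ f y) → (∀ y, f y ≤ Mx * g y) →
    (∀ x, 0 < Bv Q (n+1) wf g x) ∧
    (∀ x, mn * Bv Q (n+1) wf g x ≤ Bv Q (n+1) wf f x) ∧
    (∀ x, Bv Q (n+1) wf f x ≤ Mx * Bv Q (n+1) wf g x) ∧
    (∀ x x', Bv Q (n+1) wf f x / Bv Q (n+1) wf g x
        - Bv Q (n+1) wf f x' / Bv Q (n+1) wf g x'
      ≤ (1 - σ / (1 - σ)) ^ (n+1) * (Mx - mn)) := by
  haveI : Nonempty (Fin K) := Fin.pos_iff_nonempty.mp hKpos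
  intro n
  induction n with
  | zero =>
    intro wf hwf f g mn Mx hmn hg hgpos hfg1 hfg2
    have h := onestep σ hσ0 hσh Q hQa hQb (wf 0) (hwf 0) f g mn Mx hg hgpos hfg1 hfg2
    simpa [Bv, pow_one] using h
  | succ n IH =>
    intro wf hwf f g mn Mx hmn hg hgpos hfg1 hfg2
    set wf' : ℕ → Fin K → ℝ := fun k => wf (k+1) with hwf'def
    obtain ⟨hg1, hlow1, hhigh1, hdiff1⟩ :=
      IH wf' (fun k x => hwf (k+1) x) f g mn Mx hmn hg hgpos hfg1 hfg2
    set f1 : Fin K → ℝ := Bv Q (n+1) wf' f with hf1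
    set g1 : Fin K → ℝ := Bv Q (n+1) wf' g with hg1d
    set r : Fin K → ℝ := fun y => f1 y / g1 y with hr
    set mn1 : ℝ := Finset.univ.inf' Finset.univ_nonempty r with hmn1
    set Mx1 : ℝ := Finset.univ.sup' Finset.univ_nonempty r with hMx1
    have hrmn : ∀ y, mn ≤ r y := fun y => (le_div_iff₀ (hg1 y)).2 (hlow1 y)
    have hrMx : ∀ y, r y ≤ Mx := fun y => (div_le_iff₀ (hg1 y)).2 (hhigh1 y)
    have hmn1le : ∀ y, mn1 ≤ r y := fun y => Finset.inf'_le _ (Finset.mem_univ y)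
    have hMx1ge : ∀ y, r y ≤ Mx1 := fun y => Finset.le_sup' _ (Finset.mem_univ y)
    have hmn1pos : mn ≤ mn1 := Finset.le_inf' _ _ fun y _ => hrmn y
    have hMx1le : Mx1 ≤ Mx := Finset.sup'_le _ _ fun y _ => hrMx y
    obtain ⟨ymin, -, hymin⟩ := Finset.exists_mem_eq_inf' Finset.univ_nonempty r
    obtain ⟨ymax, -, hymax⟩ := Finset.exists_mem_eq_sup' Finset.univ_nonempty r
    have hosc : Mx1 - mn1 ≤ (1 - σ / (1 - σ)) ^ (n+1) * (Mx - mn) := by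
      rw [hMx1, hmn1, hymax, hymin]
      exact hdiff1 ymax ymin
    have hfg1' : ∀ y, mn1 * g1 y ≤ f1 y := fun y => (le_div_iff₀ (hg1 y)).1 (hmn1le y)
    have hfg2' : ∀ y, f1 y ≤ Mx1 * g1 y := fun y => (div_le_iff₀ (hg1 y)).1 (hMx1ge y)
    have hg1pos : 0 < ∑ y, g1 y := Finset.sum_pos (fun y _ => hg1 y) Finset.univ_nonempty
    obtain ⟨P1, P2, P3, P4⟩ := onestep σ hσ0 hσh Q hQa hQb (wf 0) (hwf 0) f1 g1 mn1 Mx1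
      (fun y => (hg1 y).le) hg1pos hfg1' hfg2'
    have hBf : ∀ x, Bv Q (n+2) wf f x = wf 0 x * ∑ y, Q x y * f1 y := fun x => rfl
    have hBg : ∀ x, Bv Q (n+2) wf g x = wf 0 x * ∑ y, Q x y * g1 y := fun x => rfl
    have hρ0 : (0:ℝ) < 1 - σ / (1 - σ) := by
      have h1σ : 0 < 1 - σ := by linarith
      have : σ / (1 - σ) < 1 := (div_lt_one h1σ).2 (by linarith)
      linarith
    refine ⟨fun x => by rw [hBg]; exact P1 x, fun x => ?_, fun x => ?_, fun x x' => ?_⟩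
    · rw [hBg, hBf]
      calc mn * (wf 0 x * ∑ y, Q x y * g1 y)
          ≤ mn1 * (wf 0 x * ∑ y, Q x y * g1 y) :=
            mul_le_mul_of_nonneg_right hmn1pos (P1 x).le
        _ ≤ _ := P2 x
    · rw [hBg, hBf]
      calc wf 0 x * ∑ y, Q x y * f1 y ≤ Mx1 * (wf 0 x * ∑ y, Q x y * g1 y) := P3 x
        _ ≤ Mx * (wf 0 x * ∑ y, Q x y * g1 y) :=
            mul_le_mul_of_nonneg_right hMx1le (P1 x).le
    · rw [hBg, hBf, hBg x', hBf x']
      calc (wf 0 x * ∑ y, Q x y * f1 y) / (wf 0 x * ∑ y, Q x y * g1 y)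
            - (wf 0 x' * ∑ y, Q x' y * f1 y) / (wf 0 x' * ∑ y, Q x' y * g1 y)
          ≤ (1 - σ / (1 - σ)) * (Mx1 - mn1) := P4 x x'
        _ ≤ (1 - σ / (1 - σ)) * ((1 - σ / (1 - σ)) ^ (n+1) * (Mx - mn)) :=
            mul_le_mul_of_nonneg_left hosc hρ0.le
        _ = (1 - σ / (1 - σ)) ^ (n+2) * (Mx - mn) := by ring

end
end Stmt8aux

open Stmt8aux

set_option maxHeartbeats 1000000 in
/-- the forgetting lemma. With `K ≥ 2`, `σ₋ ∈ (0,1/2)`, `ρ = 1 − σ₋/(1−σ₋)`,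
`C = 2/(ρ(1−ρ)³)`, a stochastic matrix `Q` with entries `≥ σ₋`, `t ≥ 1`, a state `x̄`,
positive weights `w_s` for `s = 0,…,t`, and
`Num(μ) = ∑ μ(x₀) ∏_{s=1}^t Q(x_{s−1},x_s) ∏_{s=0}^t w_s(x_s)`,
`Den(μ) = ∑ μ(x₀) ∏_{s=1}^t Q(x_{s−1},x_s) ∏_{s=0}^{t−1} w_s(x_s)`
(sums over `(x₀,…,x_t)` with `x_t ≠ x̄`), one has, for all probability vectors `μ, ν`,
`|log(Num(μ)/Den(μ)) − log(Num(ν)/Den(ν))| ≤ C ρ^t`. -/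
theorem stmt8 (K : ℕ) (hK : 2 ≤ K) (σ : ℝ) (hσ0 : 0 < σ) (hσhalf : σ < 1 / 2)
    (Q : Fin K → Fin K → ℝ) (hQrow : ∀ i, ∑ j, Q i j = 1) (hQlb : ∀ i j, σ ≤ Q i j)
    (t : ℕ) (ht : 1 ≤ t) (xbar : Fin K)
    (w : Fin (t + 1) → Fin K → ℝ) (hw : ∀ s x, 0 < w s x)
    (μ ν : Fin K → ℝ) (hμ0 : ∀ x, 0 ≤ μ x) (hμ1 : ∑ x, μ x = 1)
    (hν0 : ∀ x, 0 ≤ ν x) (hν1 : ∑ x, ν x = 1) :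
    let ρ : ℝ := 1 - σ / (1 - σ)
    let C : ℝ := 2 / (ρ * (1 - ρ) ^ 3)
    let Num : (Fin K → ℝ) → ℝ := fun m => ∑ x : Fin (t + 1) → Fin K,
      if x (Fin.last t) ≠ xbar then
        m (x 0) * (∏ s : Fin t, Q (x s.castSucc) (x s.succ)) * ∏ s : Fin (t + 1), w s (x s)
      else 0
    let Den : (Fin K → ℝ) → ℝ := fun m => ∑ x : Fin (t + 1) → Fin K,
      if x (Fin.last t) ≠ xbar then
        m (x 0) * (∏ s : Fin t, Q (x s.castSucc) (x s.succ)) *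
          ∏ s : Fin t, w s.castSucc (x s.castSucc)
      else 0
    |Real.log (Num μ / Den μ) - Real.log (Num ν / Den ν)| ≤ C * ρ ^ t := by
  obtain ⟨n, rfl⟩ : ∃ n, t = n + 1 := ⟨t - 1, (Nat.succ_pred_eq_of_pos ht).symm⟩
  intro ρ C Num Den
  -- basic facts
  have h1σ : 0 < 1 - σ := by linarith
  have hρdef : ρ = 1 - σ / (1 - σ) := rfl
  have hCdef : C = 2 / (ρ * (1 - ρ) ^ 3) := rfl
  have hρ0 : 0 < ρ := by
    rw [hρdef]
    have : σ / (1 - σ) < 1 := (div_lt_one h1σ).2 (by linarith)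
    linarith
  have hρ1 : ρ < 1 := by
    rw [hρdef]
    have : 0 < σ / (1 - σ) := div_pos hσ0 h1σ
    linarith
  have hKpos : 0 < K := by omega
  haveI : Nonempty (Fin K) := Fin.pos_iff_nonempty.mp hKpos
  -- upper bound on Q
  have hQub : ∀ x y, Q x y ≤ 1 - σ := by
    intro x y
    obtain ⟨z0, hz0⟩ := Fintype.exists_ne_of_one_lt_card (by rw [Fintype.card_fin]; omega) y
    have hz0mem : z0 ∈ Finset.univ.erase y := Finset.mem_erase.2 ⟨hz0, Finset.mem_univ z0⟩
    have h1 : σ ≤ ∑ z ∈ Finset.univ.erase y, Q x z :=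
      le_trans (hQlb x z0) (Finset.single_le_sum (fun z _ => le_trans hσ0.le (hQlb x z)) hz0mem)
    have h2 : (∑ z ∈ Finset.univ.erase y, Q x z) + Q x y = ∑ z, Q x z :=
      Finset.sum_erase_add _ _ (Finset.mem_univ y)
    rw [hQrow x] at h2
    linarith
  -- the weight function and terminal vectors
  set wfn : ℕ → Fin K → ℝ := fun k x => if h : k < n + 1 + 1 then w ⟨k, h⟩ x else 1 with hwfndef
  have hwfn : ∀ k x, 0 < wfn k x := by
    intro k x
    rw [hwfndef]
    dsimp only
    split
    · exact hw _ _
    · exact one_pos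
  set vN : Fin K → ℝ := fun y => if y = xbar then 0 else w (Fin.last (n+1)) y with hvNdef
  set vD : Fin K → ℝ := fun y => if y = xbar then 0 else 1 with hvDdef
  have hwfn_eq : ∀ (s : Fin (n+1)) (z : Fin K), wfn (s : ℕ) z = w s.castSucc z := by
    intro s z
    have hlt : (s : ℕ) < n + 1 + 1 := by omega
    rw [hwfndef]
    dsimp only
    rw [dif_pos hlt]
    rfl
  -- rewrite Num and Den through Bv
  have hNum : ∀ m : Fin K → ℝ, Num m = ∑ x0, m x0 * Bv Q (n+1) wfn vN x0 := by
    intro m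
    rw [← pathsum Q (n+1) wfn vN m]
    apply Finset.sum_congr rfl
    intro x _
    by_cases h : x (Fin.last (n+1)) = xbar
    · rw [if_neg (by simpa using h), hvNdef]
      dsimp only
      rw [if_pos h]
      ring
    · rw [if_pos h, hvNdef]
      dsimp only
      rw [if_neg h]
      rw [Fin.prod_univ_castSucc (f := fun s => w s (x s))]
      rw [Finset.prod_congr rfl fun s (_ : s ∈ Finset.univ) => hwfn_eq s (x s.castSucc)]
      try ring
  have hDen : ∀ m : Fin K → ℝ, Den m = ∑ x0, m x0 * Bv Q (n+1) wfn vD x0 := by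
    intro m
    rw [← pathsum Q (n+1) wfn vD m]
    apply Finset.sum_congr rfl
    intro x _
    by_cases h : x (Fin.last (n+1)) = xbar
    · rw [if_neg (by simpa using h), hvDdef]
      dsimp only
      rw [if_pos h]
      ring
    · rw [if_pos h, hvDdef]
      dsimp only
      rw [if_neg h]
      rw [Finset.prod_congr rfl fun s (_ : s ∈ Finset.univ) => hwfn_eq s (x s.castSucc)]
      try ring
  -- peel the innermost step
  set FN : Fin K → ℝ := fun x => wfn n x * ∑ y, Q x y * vN y with hFNdef
  set GN : Fin K → ℝ := fun x => wfn n x * ∑ y, Q x y * vD y with hGNdef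
  have hpeelN : Bv Q (n+1) wfn vN = Bv Q n wfn FN := by rw [hFNdef]; exact Bv_peel Q n wfn vN
  have hpeelD : Bv Q (n+1) wfn vD = Bv Q n wfn GN := by rw [hGNdef]; exact Bv_peel Q n wfn vD
  -- basic facts about terminal vectors
  obtain ⟨z0, hz0⟩ := Fintype.exists_ne_of_one_lt_card (by rw [Fintype.card_fin]; omega) xbar
  have hvN0 : ∀ y, 0 ≤ vN y := by
    intro y; rw [hvNdef]; dsimp only; split
    · exact le_refl 0
    · exact (hw _ _).le
  set S : ℝ := ∑ y, vN y with hSdef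
  have hS : 0 < S := Finset.sum_pos' (fun y _ => hvN0 y)
    ⟨z0, Finset.mem_univ z0, by rw [hvNdef]; dsimp only; rw [if_neg hz0]; exact hw _ _⟩
  have hvD0 : ∀ y, 0 ≤ vD y := by
    intro y; rw [hvDdef]; dsimp only; split
    · exact le_refl 0
    · exact zero_le_one
  have hvD1 : ∀ y, vD y ≤ 1 := by
    intro y; rw [hvDdef]; dsimp only; split
    · exact zero_le_one
    · exact le_refl 1
  have hsumvD : 0 < ∑ y, vD y := Finset.sum_pos' (fun y _ => hvD0 y)
    ⟨z0, Finset.mem_univ z0, by rw [hvDdef]; dsimp only; rw [if_neg hz0]; exact one_pos⟩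
  have hvND : ∀ y, vN y ≤ S * vD y := by
    intro y
    by_cases h : y = xbar
    · rw [hvNdef, hvDdef]; dsimp only; rw [if_pos h, if_pos h, mul_zero]
    · have h1 : vN y ≤ S := Finset.single_le_sum (fun y _ => hvN0 y) (Finset.mem_univ y)
      rw [hvDdef]; dsimp only; rw [if_neg h, mul_one]; exact h1
  have h0vN : ∀ y, 0 * vD y ≤ vN y := by intro y; rw [zero_mul]; exact hvN0 y
  obtain ⟨P1, P2, P3, P4⟩ := onestep σ hσ0 hσhalf Q hQlb hQub (wfn n) (hwfn n) vN vD 0 S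
    hvD0 hsumvD h0vN hvND
  have hGNpos : ∀ x, 0 < GN x := P1
  have hFNhigh : ∀ x, FN x ≤ S * GN x := P3
  have hQ0 : ∀ x y, 0 ≤ Q x y := fun x y => le_trans hσ0.le (hQlb x y)
  have hσS : 0 < σ * S := mul_pos hσ0 hS
  have hFNlow : ∀ x, σ * S * GN x ≤ FN x := by
    intro x
    have hF1 : σ * S ≤ ∑ y, Q x y * vN y := by
      rw [hSdef, Finset.mul_sum]
      exact Finset.sum_le_sum fun y _ => mul_le_mul_of_nonneg_right (hQlb x y) (hvN0 y)
    have hG1 : (∑ y, Q x y * vD y) ≤ 1 := by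
      have h1 : (∑ y, Q x y * vD y) ≤ ∑ y, Q x y :=
        Finset.sum_le_sum fun y _ => by
          have := hvD1 y; have := hvD0 y; have := hQ0 x y; nlinarith
      rw [hQrow x] at h1; exact h1
    have hc := hwfn n x
    show σ * S * (wfn n x * ∑ y, Q x y * vD y) ≤ wfn n x * ∑ y, Q x y * vN y
    nlinarith [mul_le_mul_of_nonneg_left hG1 hσS.le, mul_le_mul_of_nonneg_left hF1 hc.le,
      mul_le_mul_of_nonneg_left (mul_le_mul_of_nonneg_left hG1 hσS.le) hc.le]
  -- ratio bounds after one step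
  set r1 : Fin K → ℝ := fun x => FN x / GN x with hr1def
  set mn1 : ℝ := Finset.univ.inf' Finset.univ_nonempty r1 with hmn1def
  set Mx1 : ℝ := Finset.univ.sup' Finset.univ_nonempty r1 with hMx1def
  have hr1low : ∀ x, σ * S ≤ r1 x := fun x => (le_div_iff₀ (hGNpos x)).2 (hFNlow x)
  have hr1high : ∀ x, r1 x ≤ S := fun x => (div_le_iff₀ (hGNpos x)).2 (hFNhigh x)
  have hmn1σ : σ * S ≤ mn1 := Finset.le_inf' _ _ fun x _ => hr1low x
  have hMx1S : Mx1 ≤ S := Finset.sup'_le _ _ fun x _ => hr1high x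
  have hmn1pos : 0 < mn1 := lt_of_lt_of_le hσS hmn1σ
  have hosc1 : Mx1 - mn1 ≤ ρ * S := by
    obtain ⟨ymin, -, hymin⟩ := Finset.exists_mem_eq_inf' (Finset.univ_nonempty (α := Fin K)) r1
    obtain ⟨ymax, -, hymax⟩ := Finset.exists_mem_eq_sup' (Finset.univ_nonempty (α := Fin K)) r1
    rw [hMx1def, hmn1def, hymax, hymin]
    have := P4 ymax ymin
    rw [sub_zero] at this
    exact this
  have hfg1' : ∀ x, mn1 * GN x ≤ FN x := fun x =>
    (le_div_iff₀ (hGNpos x)).1 (Finset.inf'_le r1 (Finset.mem_univ x))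
  have hfg2' : ∀ x, FN x ≤ Mx1 * GN x := fun x =>
    (div_le_iff₀ (hGNpos x)).1 (Finset.le_sup' r1 (Finset.mem_univ x))
  -- main contraction
  have hmain : (∀ x, 0 < Bv Q n wfn GN x) ∧
      (∀ x, mn1 * Bv Q n wfn GN x ≤ Bv Q n wfn FN x) ∧
      (∀ x, Bv Q n wfn FN x ≤ Mx1 * Bv Q n wfn GN x) ∧
      (∀ x x', Bv Q n wfn FN x / Bv Q n wfn GN x - Bv Q n wfn FN x' / Bv Q n wfn GN x'
        ≤ ρ ^ n * (Mx1 - mn1)) := by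
    cases n with
    | zero =>
      refine ⟨hGNpos, hfg1', hfg2', fun x x' => ?_⟩
      rw [pow_zero, one_mul]
      have h1 : (Bv Q 0 wfn FN x : ℝ) / Bv Q 0 wfn GN x ≤ Mx1 :=
        (div_le_iff₀ (hGNpos x)).2 (hfg2' x)
      have h2 : mn1 ≤ (Bv Q 0 wfn FN x' : ℝ) / Bv Q 0 wfn GN x' :=
        (le_div_iff₀ (hGNpos x')).2 (hfg1' x')
      linarith
    | succ m =>
      have hGNsum : 0 < ∑ y, GN y := Finset.sum_pos (fun y _ => hGNpos y) Finset.univ_nonempty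
      exact contr σ hσ0 hσhalf Q hQlb hQub hKpos m wfn hwfn FN GN mn1 Mx1
        hmn1pos.le (fun y => (hGNpos y).le) hGNsum hfg1' hfg2'
  obtain ⟨hG0pos, hlow0, hhigh0, hdiff0⟩ := hmain
  set F0 : Fin K → ℝ := Bv Q n wfn FN with hF0def
  set G0 : Fin K → ℝ := Bv Q n wfn GN with hG0def
  -- final ratio bounds
  set rf : Fin K → ℝ := fun x => F0 x / G0 x with hrfdef
  set mnR : ℝ := Finset.univ.inf' Finset.univ_nonempty rf with hmnRdef
  set MxR : ℝ := Finset.univ.sup' Finset.univ_nonempty rf with hMxRdef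
  have hrflow : ∀ x, σ * S ≤ rf x := fun x =>
    (le_div_iff₀ (hG0pos x)).2 (le_trans (mul_le_mul_of_nonneg_right hmn1σ (hG0pos x).le) (hlow0 x))
  have hmnRσ : σ * S ≤ mnR := Finset.le_inf' _ _ fun x _ => hrflow x
  have hmnRpos : 0 < mnR := lt_of_lt_of_le hσS hmnRσ
  have hdR : MxR - mnR ≤ ρ ^ (n+1) * S := by
    obtain ⟨ymin, -, hymin⟩ := Finset.exists_mem_eq_inf' (Finset.univ_nonempty (α := Fin K)) rf
    obtain ⟨ymax, -, hymax⟩ := Finset.exists_mem_eq_sup' (Finset.univ_nonempty (α := Fin K)) rf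
    rw [hMxRdef, hmnRdef, hymax, hymin]
    calc rf ymax - rf ymin ≤ ρ ^ n * (Mx1 - mn1) := hdiff0 ymax ymin
      _ ≤ ρ ^ n * (ρ * S) := mul_le_mul_of_nonneg_left hosc1 (pow_nonneg hρ0.le n)
      _ = ρ ^ (n+1) * S := by ring
  have hratlow : ∀ x, mnR * G0 x ≤ F0 x := fun x =>
    (le_div_iff₀ (hG0pos x)).1 (Finset.inf'_le rf (Finset.mem_univ x))
  have hrathigh : ∀ x, F0 x ≤ MxR * G0 x := fun x =>
    (div_le_iff₀ (hG0pos x)).1 (Finset.le_sup' rf (Finset.mem_univ x))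
  -- bounds for the two ratios
  have key : ∀ m : Fin K → ℝ, (∀ x, 0 ≤ m x) → (∑ x, m x = 1) →
      0 < Den m ∧ mnR ≤ Num m / Den m ∧ Num m / Den m ≤ MxR := by
    intro m hm0 hm1
    have hNm : Num m = ∑ x, m x * F0 x := by rw [hNum m, hpeelN, hF0def]
    have hDm : Den m = ∑ x, m x * G0 x := by rw [hDen m, hpeelD, hG0def]
    obtain ⟨x0, hx0⟩ : ∃ x, 0 < m x := by
      by_contra hcon
      push_neg at hcon
      have h1 : (∑ x, m x) ≤ 0 := Finset.sum_nonpos fun x _ => hcon x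
      rw [hm1] at h1
      linarith
    have hDpos : 0 < Den m := by
      rw [hDm]
      exact Finset.sum_pos' (fun x _ => mul_nonneg (hm0 x) (hG0pos x).le)
        ⟨x0, Finset.mem_univ x0, mul_pos hx0 (hG0pos x0)⟩
    have hlowm : mnR * Den m ≤ Num m := by
      rw [hNm, hDm, Finset.mul_sum]
      exact Finset.sum_le_sum fun x _ =>
        calc mnR * (m x * G0 x) = m x * (mnR * G0 x) := by ring
          _ ≤ m x * F0 x := mul_le_mul_of_nonneg_left (hratlow x) (hm0 x)
    have hhighm : Num m ≤ MxR * Den m := by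
      rw [hNm, hDm, Finset.mul_sum]
      exact Finset.sum_le_sum fun x _ =>
        calc m x * F0 x ≤ m x * (MxR * G0 x) := mul_le_mul_of_nonneg_left (hrathigh x) (hm0 x)
          _ = MxR * (m x * G0 x) := by ring
    exact ⟨hDpos, (le_div_iff₀ hDpos).2 hlowm, (div_le_iff₀ hDpos).2 hhighm⟩
  obtain ⟨hDμ, hμlow, hμhigh⟩ := key μ hμ0 hμ1
  obtain ⟨hDν, hνlow, hνhigh⟩ := key ν hν0 hν1
  have hRμpos : 0 < Num μ / Den μ := lt_of_lt_of_le hmnRpos hμlow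
  have hRνpos : 0 < Num ν / Den ν := lt_of_lt_of_le hmnRpos hνlow
  have hMxRpos : 0 < MxR := lt_of_lt_of_le hRμpos hμhigh
  have habs : |Real.log (Num μ / Den μ) - Real.log (Num ν / Den ν)|
      ≤ Real.log MxR - Real.log mnR := by
    rw [abs_sub_le_iff]
    constructor
    · have h1 := Real.log_le_log hRμpos hμhigh
      have h2 := Real.log_le_log hmnRpos hνlow
      linarith
    · have h1 := Real.log_le_log hRνpos hνhigh
      have h2 := Real.log_le_log hmnRpos hμlow
      linarith
  have hlogd : Real.log MxR - Real.log mnR ≤ (MxR - mnR) / mnR := by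
    rw [← Real.log_div (ne_of_gt hMxRpos) (ne_of_gt hmnRpos)]
    have h2 := Real.log_le_sub_one_of_pos (div_pos hMxRpos hmnRpos)
    have h3 : MxR / mnR - 1 = (MxR - mnR) / mnR := by field_simp
    linarith
  have hfinal1 : (MxR - mnR) / mnR ≤ (ρ ^ (n+1) * S) / (σ * S) :=
    div_le_div₀ (by positivity) hdR hσS hmnRσ
  have heqS : (ρ ^ (n+1) * S) / (σ * S) = ρ ^ (n+1) / σ := by
    rw [mul_div_mul_right _ _ (ne_of_gt hS)]
  -- the constant
  have h1ρ : 0 < 1 - ρ := by linarith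
  have hρρ : 0 < ρ * (1 - ρ) ^ 3 := by positivity
  have e1 : ρ * (1 - σ) = 1 - 2*σ := by rw [hρdef]; field_simp; ring
  have e2 : (1 - ρ) * (1 - σ) = σ := by rw [hρdef]; field_simp; ring
  have h3 : ρ * (1 - ρ) ^ 3 * (1 - σ) ^ 4 = (1 - 2*σ) * σ ^ 3 := by
    calc ρ * (1 - ρ) ^ 3 * (1 - σ) ^ 4 = (ρ * (1 - σ)) * ((1 - ρ) * (1 - σ)) ^ 3 := by ring
      _ = (1 - 2*σ) * σ ^ 3 := by rw [e1, e2]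
  have hpoly : (1 - 2*σ) * σ ^ 3 ≤ 2 * σ * (1 - σ) ^ 4 := by
    have ha : (1 - 2*σ : ℝ) ≤ (1 - σ) ^ 2 := by nlinarith [sq_nonneg σ]
    have hb : σ ^ 2 ≤ (1 - σ) ^ 2 := by nlinarith
    have hab : (1 - 2*σ) * σ ^ 2 ≤ (1 - σ) ^ 2 * (1 - σ) ^ 2 :=
      mul_le_mul ha hb (sq_nonneg σ) (sq_nonneg (1 - σ))
    nlinarith [mul_le_mul_of_nonneg_left hab hσ0.le]
  have hkey2 : ρ * (1 - ρ) ^ 3 ≤ 2 * σ := by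
    nlinarith [h3, hpoly, pow_pos h1σ 4]
  have hC : 1 / σ ≤ C := by
    rw [hCdef, div_le_div_iff₀ hσ0 hρρ]
    linarith
  have hfinal2 : ρ ^ (n+1) / σ ≤ C * ρ ^ (n+1) := by
    have hp : 0 < ρ ^ (n+1) := pow_pos hρ0 _
    calc ρ ^ (n+1) / σ = (1 / σ) * ρ ^ (n+1) := by ring
      _ ≤ C * ρ ^ (n+1) := mul_le_mul_of_nonneg_right hC hp.le
  calc |Real.log (Num μ / Den μ) - Real.log (Num ν / Den ν)|
      ≤ Real.log MxR - Real.log mnR := habs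
    _ ≤ (MxR - mnR) / mnR := hlogd
    _ ≤ (ρ ^ (n+1) * S) / (σ * S) := hfinal1
    _ = ρ ^ (n+1) / σ := heqS
    _ ≤ C * ρ ^ (n+1) := hfinal2
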